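/- Let $a>0$, $m\in\{1,2\}$, $\beta\in(-m,0)$, $\mu=\beta/m$, $\xi_{\mathrm w}=-\frac{am}{m+\beta}$, $U_{\mathrm w}=\frac{a\beta}{m+\beta}$. Suppose $U:(-\infty,\xi_{\mathrm w})\to\mathbb{R}$ is differentiable, satisfies $\big((U(\xi)-\xi)^2-a^2\big)U'(\xi)=a^2\big(\beta+\tfrac{mU(\xi)}{\xi}\big)$ for all $\xi<\xi_{\mathrm w}$, $U(\xi)>-\mu\xi$ and $U(\xi)>U_{\mathrm w}$ for all $\xi<\xi_{\mathrm w}$, and $\lim_{\xi\to\xi_{\mathrm w}^-}U(\xi)=U_{\mathrm w}$. Then the limit $U^*:=\lim_{\xi\to-\infty}U(\xi)$ exists and satisfies $U^*< U_{\mathrm w}+a^2m\int_{-\infty}^{\xi_{\mathrm w}}\frac{d\xi}{\xi\,(\xi-(a+U_{\mathrm w}))}$. -/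

import Mathlib

open MeasureTheory Set Real Filter


lemma aux_int (k b : ℝ) (hb : b < 0) (hbk : b < k) :
    MeasureTheory.IntegrableOn (fun ξ => (ξ * (ξ - k))⁻¹) (Set.Iic b) := by
  rw [← (Measure.measurePreserving_neg (volume : Measure ℝ)).integrableOn_comp_preimage
      (Homeomorph.neg ℝ).measurableEmbedding]
  simp only [Function.comp_def, neg_preimage, neg_Iic]
  -- goal : IntegrableOn (fun x => (-x * (-x - k))⁻¹) (Ici (-b))
  rw [integrableOn_Ici_iff_integrableOn_Ioi]
  set c : ℝ := min 1 ((k - b) / (-b)) with hc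
  have hb0 : (0:ℝ) < -b := by linarith
  have hcpos : 0 < c := lt_min one_pos (div_pos (by linarith) (by linarith))
  have hbound : ∀ x ∈ Ioi (-b), c * x ^ 2 ≤ -x * (-x - k) := by
    intro x hx
    have hx0 : -b < x := hx
    have h1 : -x * (-x - k) = x * (x + k) := by ring
    rw [h1]
    rcases le_or_gt 0 k with hk | hk
    · calc c * x ^ 2 ≤ 1 * x ^ 2 := by nlinarith [min_le_left 1 ((k-b)/(-b))]
        _ ≤ x * (x + k) := by nlinarith
    · have h2 : c ≤ (k - b) / (-b) := min_le_right _ _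
      have h3 : (k - b) / (-b) * x ^ 2 ≤ x * (x + k) := by
        rw [div_mul_eq_mul_div, div_le_iff₀ hb0]
        have hxpos : 0 < x := lt_trans hb0 hx0
        nlinarith [mul_nonneg (mul_nonneg (neg_nonneg.2 hk.le) hxpos.le) (by linarith : (0:ℝ) ≤ x + b)]
      nlinarith [sq_nonneg x]
  apply Integrable.mono' (g := fun x => c⁻¹ * x ^ (-2 : ℝ))
      ((integrableOn_Ioi_rpow_of_lt (by norm_num) hb0).const_mul c⁻¹)
  · apply ContinuousOn.aestronglyMeasurable _ measurableSet_Ioi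
    apply ContinuousOn.inv₀ (by fun_prop)
    intro x hx
    have hx0 : -b < x := hx
    have hxpos : 0 < x := lt_trans hb0 hx0
    nlinarith [hbound x hx, mul_pos hcpos (pow_pos hxpos 2)]
  · filter_upwards [ae_restrict_mem measurableSet_Ioi] with x hx
    have hx0 : (0:ℝ) < x := lt_trans hb0 hx
    have hpos : 0 < -x * (-x - k) := by nlinarith [hbound x hx, mul_pos hcpos (pow_pos hx0 2)]
    rw [Real.norm_eq_abs, abs_of_pos (inv_pos.2 hpos),
      Real.rpow_neg hx0.le, Real.rpow_two]
    rw [← mul_inv, inv_le_inv₀ hpos (by positivity)]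
    exact hbound x hx


/-- The kink-solution's limit `U*` at `ξ = -∞` exists and satisfies the integral bound
`U* < U_w + a²m ∫_{-∞}^{ξ_w} dξ/(ξ(ξ-(a+U_w)))`. -/
theorem kink_solution_limit_bound
    (a : ℝ) (ha : 0 < a) (m : ℕ) (hm : m = 1 ∨ m = 2)
    (β : ℝ) (hβ : β ∈ Set.Ioo (-(m : ℝ)) 0)
    (μ : ℝ) (hμ : μ = β / m)
    (ξw Uw : ℝ) (hξw : ξw = -(a * m) / (m + β)) (hUw : Uw = a * β / (m + β))
    (U : ℝ → ℝ)
    (hdiff : ∀ ξ < ξw, DifferentiableAt ℝ U ξ)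
    (hode : ∀ ξ < ξw, ((U ξ - ξ) ^ 2 - a ^ 2) * deriv U ξ = a ^ 2 * (β + m * U ξ / ξ))
    (hreg : ∀ ξ < ξw, -μ * ξ < U ξ)
    (habove : ∀ ξ < ξw, Uw < U ξ)
    (hlim : Filter.Tendsto U (nhdsWithin ξw (Set.Iio ξw)) (nhds Uw)) :
    ∃ Ustar : ℝ, Filter.Tendsto U Filter.atBot (nhds Ustar) ∧
      Ustar < Uw + a ^ 2 * m * ∫ ξ in Set.Iic ξw, (ξ * (ξ - (a + Uw)))⁻¹ := by
  obtain ⟨hβ1, hβ2⟩ := hβ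
  have hm0 : (0:ℝ) < m := by rcases hm with h | h <;> simp [h]
  have hmβ : 0 < (m:ℝ) + β := by linarith
  have hξw0 : ξw < 0 := by
    rw [hξw]; apply div_neg_of_neg_of_pos _ hmβ; nlinarith
  have hkey : Uw - ξw = a := by
    rw [hUw, hξw]; field_simp; ring
  have hμ1 : -1 < μ := by rw [hμ, lt_div_iff₀ hm0] at *; linarith
  have hμ0 : μ < 0 := by rw [hμ]; exact div_neg_of_neg_of_pos hβ2 hm0
  have hβμ : β = μ * m := by rw [hμ]; field_simp
  have haξw : a = -(1 + μ) * ξw := by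
    rw [hμ, hξw]; field_simp
  set k : ℝ := a + Uw with hk
  have hξwk : ξw < k := by simp only [hk]; linarith
  set g : ℝ → ℝ := fun ξ => a ^ 2 * m * (ξ * (ξ - k))⁻¹ with hg
  -- pointwise facts
  have hDpos : ∀ ξ < ξw, 0 < (U ξ - ξ) ^ 2 - a ^ 2 := by
    intro ξ hξ
    have h1 : a < U ξ - ξ := by have := habove ξ hξ; linarith
    nlinarith
  have hderiv_eq : ∀ ξ < ξw, deriv U ξ =
      a ^ 2 * (β + m * U ξ / ξ) / ((U ξ - ξ) ^ 2 - a ^ 2) := by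
    intro ξ hξ
    rw [eq_div_iff (ne_of_gt (hDpos ξ hξ))]
    linarith [hode ξ hξ]
  have hnum_neg : ∀ ξ < ξw, β + m * U ξ / ξ < 0 := by
    intro ξ hξ
    have hξ0 : ξ < 0 := lt_trans hξ hξw0
    have h1 : -μ * ξ < U ξ := hreg ξ hξ
    have h2 : U ξ / ξ < -μ := by
      rw [div_lt_iff_of_neg hξ0]; linarith
    have h3 : m * (U ξ / ξ) < m * (-μ) := by
      exact (mul_lt_mul_iff_right₀ hm0).2 h2
    rw [mul_div_assoc]; nlinarith
  have hderiv_neg : ∀ ξ < ξw, deriv U ξ < 0 := by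
    intro ξ hξ
    rw [hderiv_eq ξ hξ]
    exact div_neg_of_neg_of_pos
      (mul_neg_of_pos_of_neg (by positivity) (hnum_neg ξ hξ)) (hDpos ξ hξ)
  have hgpos : ∀ ξ ≤ ξw, 0 < g ξ := by
    intro ξ hξ
    have hξ0 : ξ < 0 := lt_of_le_of_lt hξ hξw0
    have h1 : ξ - k < 0 := by linarith
    have : 0 < ξ * (ξ - k) := mul_pos_of_neg_of_neg hξ0 h1
    simp only [hg]; positivity
  have hbound : ∀ ξ < ξw, -deriv U ξ < g ξ := by
    intro ξ hξ
    have hξ0 : ξ < 0 := lt_trans hξ hξw0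
    have p1 : 0 < U ξ + μ * ξ := by have := hreg ξ hξ; linarith
    have p2 : U ξ + μ * ξ < U ξ - ξ - a := by nlinarith [hμ1, hξ]
    have p3 : 0 < k - ξ := by linarith
    have p4 : k - ξ < U ξ - ξ + a := by have := habove ξ hξ; simp only [hk]; linarith
    have hP : (U ξ + μ * ξ) * (k - ξ) < (U ξ - ξ) ^ 2 - a ^ 2 := by nlinarith
    have hξne : ξ ≠ 0 := ne_of_lt hξ0
    have hDne : ((U ξ - ξ) ^ 2 - a ^ 2) ≠ 0 := ne_of_gt (hDpos ξ hξ)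
    have h1 : -deriv U ξ = a ^ 2 * m * (U ξ + μ * ξ) / ((-ξ) * ((U ξ - ξ) ^ 2 - a ^ 2)) := by
      rw [hderiv_eq ξ hξ, hβμ]
      field_simp
      ring
    have h2 : g ξ = a ^ 2 * m / ((-ξ) * (k - ξ)) := by
      simp only [hg]
      rw [div_eq_mul_inv]
      congr 1
      ring
    have hnξ : 0 < -ξ := neg_pos.2 hξ0
    rw [h1, h2, div_lt_div_iff₀ (mul_pos hnξ (hDpos ξ hξ)) (mul_pos hnξ p3)]
    have c1 : 0 < a ^ 2 * (m : ℝ) * (-ξ) := mul_pos (mul_pos (pow_pos ha 2) hm0) hnξ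
    nlinarith [mul_lt_mul_of_pos_left hP c1]
  -- continuity
  have hUcont : ContinuousOn U (Iio ξw) := fun x hx =>
    (hdiff x hx).continuousAt.continuousWithinAt
  have hgcont : ContinuousOn g (Iic ξw) := by
    simp only [hg]
    apply continuousOn_const.mul
    apply ContinuousOn.inv₀ (by fun_prop)
    intro x hx
    have hxw : x ≤ ξw := hx
    have hx0 : x < 0 := lt_of_le_of_lt hxw hξw0
    have hx1 : x - k < 0 := by linarith
    exact ne_of_gt (mul_pos_of_neg_of_neg hx0 hx1)
  have hdcont : ContinuousOn (deriv U) (Iio ξw) := by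
    have hF : ContinuousOn
        (fun ξ => a ^ 2 * (β + m * U ξ / ξ) / ((U ξ - ξ) ^ 2 - a ^ 2)) (Iio ξw) := by
      apply ContinuousOn.div
      · exact continuousOn_const.mul (continuousOn_const.add
          ((continuousOn_const.mul hUcont).div continuousOn_id
            (fun x hx => ne_of_lt (lt_trans hx hξw0))))
      · exact ((hUcont.sub continuousOn_id).pow 2).sub continuousOn_const
      · exact fun x hx => ne_of_gt (hDpos x hx)
    exact hF.congr (fun x hx => hderiv_eq x hx)
  -- FTC and interval integrability
  have hdii : ∀ x y : ℝ, x ≤ y → y < ξw → IntervalIntegrable (deriv U) volume x y := by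
    intro x y hxy hy
    apply ContinuousOn.intervalIntegrable
    rw [uIcc_of_le hxy]
    exact hdcont.mono (fun t ht => lt_of_le_of_lt ht.2 hy)
  have hgii : ∀ x y : ℝ, x ≤ y → y ≤ ξw → IntervalIntegrable g volume x y := by
    intro x y hxy hy
    apply ContinuousOn.intervalIntegrable
    rw [uIcc_of_le hxy]
    exact hgcont.mono (fun t ht => le_trans ht.2 hy)
  have hFTC : ∀ x y, x < y → y < ξw → U y - U x = ∫ t in x..y, deriv U t := by
    intro x y hxy hy
    refine (intervalIntegral.integral_eq_sub_of_hasDerivAt ?_ (hdii x y hxy.le hy)).symm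
    intro t ht
    rw [uIcc_of_le hxy.le] at ht
    exact (hdiff t (lt_of_le_of_lt ht.2 hy)).hasDerivAt
  have hlt : ∀ x y, x < y → y < ξw → U x < U y + ∫ t in x..y, g t := by
    intro x y hxy hy
    have h1 := hFTC x y hxy hy
    have hpos : 0 < ∫ t in x..y, (deriv U t + g t) := by
      apply intervalIntegral.intervalIntegral_pos_of_pos_on
        ((hdii x y hxy.le hy).add (hgii x y hxy.le hy.le)) _ hxy
      intro t ht
      have := hbound t (lt_trans ht.2 hy)
      linarith
    rw [intervalIntegral.integral_add (hdii x y hxy.le hy) (hgii x y hxy.le hy.le)] at hpos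
    linarith
  have hnn : ∀ x y : ℝ, x ≤ y → y ≤ ξw → 0 ≤ ∫ t in x..y, g t := by
    intro x y hxy hy
    exact intervalIntegral.integral_nonneg hxy
      (fun t ht => (hgpos t (le_trans ht.2 hy)).le)
  set ξ0 : ℝ := ξw - 1 with hξ0def
  set ξ2 : ℝ := ξw - 2⁻¹ with hξ2def
  have hξ02 : ξ0 < ξ2 := by rw [hξ0def, hξ2def]; norm_num
  have hξ2w : ξ2 < ξw := by rw [hξ2def]; norm_num
  have hξ0w : ξ0 < ξw := by rw [hξ0def]; norm_num
  -- bound near ξw using the limit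
  have h2w : U ξ2 ≤ Uw + ∫ t in ξ2..ξw, g t := by
    have hev : ∀ᶠ y in nhdsWithin ξw (Iio ξw),
        U ξ2 - (∫ t in ξ2..ξw, g t) ≤ U y := by
      filter_upwards [Ioo_mem_nhdsLT_of_mem (right_mem_Ioc.2 hξ2w)] with y hy
      have h1 := (hlt ξ2 y hy.1 hy.2).le
      have hsplit : (∫ t in ξ2..y, g t) + ∫ t in y..ξw, g t = ∫ t in ξ2..ξw, g t :=
        intervalIntegral.integral_add_adjacent_intervals
          (hgii ξ2 y hy.1.le hy.2.le) (hgii y ξw hy.2.le le_rfl)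
      have h2 := hnn y ξw hy.2.le le_rfl
      linarith
    have := ge_of_tendsto hlim hev
    linarith
  have hkeylt : U ξ0 < Uw + ∫ t in ξ0..ξw, g t := by
    have h1 := hlt ξ0 ξ2 hξ02 hξ2w
    have hsplit : (∫ t in ξ0..ξ2, g t) + ∫ t in ξ2..ξw, g t = ∫ t in ξ0..ξw, g t :=
      intervalIntegral.integral_add_adjacent_intervals
        (hgii ξ0 ξ2 hξ02.le hξ2w.le) (hgii ξ2 ξw hξ2w.le le_rfl)
    linarith
  -- integrability on half-lines
  have hgint : IntegrableOn g (Iic ξw) := by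
    have := (aux_int k ξw hξw0 hξwk).const_mul (a ^ 2 * (m : ℝ))
    simpa [hg, mul_comm, IntegrableOn] using this
  have hgint0 : IntegrableOn g (Iic ξ0) := hgint.mono_set (Iic_subset_Iic.2 hξ0w.le)
  have hIw : ∫ t in ξ0..ξw, g t = (∫ t in Iic ξw, g t) - ∫ t in Iic ξ0, g t :=
    (intervalIntegral.integral_Iic_sub_Iic hgint0 hgint).symm
  -- uniform upper bound
  have hub : ∀ x ≤ ξ0, U x ≤ U ξ0 + ∫ t in Iic ξ0, g t := by
    intro x hx
    have h3 : 0 ≤ ∫ t in Iic x, g t :=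
      setIntegral_nonneg measurableSet_Iic
        (fun t ht => (hgpos t (le_trans (le_trans (mem_Iic.1 ht) hx) hξ0w.le)).le)
    have h4 : 0 ≤ ∫ t in Iic ξ0, g t :=
      setIntegral_nonneg measurableSet_Iic
        (fun t ht => (hgpos t (le_trans (mem_Iic.1 ht) hξ0w.le)).le)
    rcases eq_or_lt_of_le hx with rfl | hx'
    · linarith
    · have h1 := (hlt x ξ0 hx' hξ0w).le
      have h2 : ∫ t in x..ξ0, g t = (∫ t in Iic ξ0, g t) - ∫ t in Iic x, g t :=
        (intervalIntegral.integral_Iic_sub_Iic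
          (hgint0.mono_set (Iic_subset_Iic.2 hx'.le)) hgint0).symm
      linarith
  -- monotone limit at -∞
  have hanti : StrictAntiOn U (Iio ξw) :=
    strictAntiOn_of_deriv_neg (convex_Iio ξw) hUcont
      (fun x hx => hderiv_neg x (by rwa [interior_Iio] at hx))
  set W : ℝ → ℝ := fun x => U (min x ξ0) with hWdef
  have hmem : ∀ x : ℝ, min x ξ0 ∈ Iio ξw := fun x =>
    mem_Iio.2 (lt_of_le_of_lt (min_le_right x ξ0) hξ0w)
  have hWanti : Antitone W := by
    intro x y hxy
    rcases eq_or_lt_of_le (min_le_min hxy (le_refl ξ0)) with h | h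
    · show U (min y ξ0) ≤ U (min x ξ0)
      rw [h]
    · exact (hanti (hmem x) (hmem y) h).le
  have hWbdd : BddAbove (range W) := by
    refine ⟨U ξ0 + ∫ t in Iic ξ0, g t, ?_⟩
    rintro _ ⟨x, rfl⟩
    exact hub (min x ξ0) (min_le_right _ _)
  have hWt : Tendsto W atBot (nhds (⨆ x, W x)) := tendsto_atBot_ciSup hWanti hWbdd
  have hUW : W =ᶠ[atBot] U := by
    filter_upwards [eventually_le_atBot ξ0] with x hx
    simp only [hWdef, min_eq_left hx]
  refine ⟨⨆ x, W x, hWt.congr' hUW, ?_⟩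
  have hsup : (⨆ x, W x) ≤ U ξ0 + ∫ t in Iic ξ0, g t :=
    ciSup_le (fun x => hub (min x ξ0) (min_le_right _ _))
  have hval : ∫ t in Iic ξw, g t = a ^ 2 * m * ∫ ξ in Iic ξw, (ξ * (ξ - (a + Uw)))⁻¹ := by
    simp only [hg, hk]
    exact MeasureTheory.integral_const_mul _ _
  linarith
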